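/- Let (U,τ_U) and (V,τ_V) be topological structures for L with underlying sets A and B, assume AP(U) separates the points of A and AP(V) separates the points of B, and let T be a non-vanishing linear isometry of AP(U) onto AP(V), so that (Tf)(y) = w(y)·f(h(y)) as in part (i). Suppose Φ ∈ L is a binary function symbol whose interpretations Φ_U and Φ_V are associative and have neutral elements 1_U ∈ A and 1_V ∈ B respectively, and suppose T commutes with translations: there is a map λ : B → A such that for all f ∈ AP(U) and all y ∈ B, (Tf)∘(Φ_V)_y = T(f∘(Φ_U)_{λ(y)}), where Φ_y denotes the right translation z ↦ Φ(z,y). Then there exists b ∈ B such that the map k : B → A defined by k(y) = h(Φ_V(b,y)) is a Φ-isomorphism of V onto U: k is a bijection of B onto A, k(Φ_V(z,y)) = Φ_U(k(z),k(y)) for all z,y ∈ B, and k(1_V) = 1_U. -/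

import Mathlib

open FirstOrder UniformFun
open scoped UniformConvergence Topology
open scoped Uniformity

/-- Fill the `j`-th coordinate with `a`, the others given by `x`. -/
def Fill {A : Type*} {n : ℕ} (j : Fin n) (x : {i : Fin n // i ≠ j} → A) (a : A) : Fin n → A :=
  fun i => if h : i = j then a else x ⟨i, h⟩

/-- A simple translation of the structure. -/
def IsSimpleTranslation (L : FirstOrder.Language) (A : Type*) [L.Structure A] (t : A → A) : Prop :=
  ∃ (n : ℕ) (Φ : L.Functions n) (j : Fin n) (x : {i : Fin n // i ≠ j} → A),
    t = fun a => Language.Structure.funMap Φ (Fill j x a)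

/-- The translation semigroup `S(U)`: finite compositions of simple translations. -/
inductive IsTranslation (L : FirstOrder.Language) (A : Type*) [L.Structure A] : (A → A) → Prop
  | simple {t : A → A} : IsSimpleTranslation L A t → IsTranslation L A t
  | comp {s t : A → A} : IsTranslation L A s → IsTranslation L A t → IsTranslation L A (s ∘ t)

/-- A bounded continuous `f : A → ℂ` is almost periodic if for every `n`-ary function symbol `Φ`,
every translation `t ∈ S(U)` and every coordinate `j`, the family of functions
`x ↦ f (t (Φ (x₁, …, a, …, xₙ)))`, indexed by `a ∈ A`, is relatively compact in
`C_∞(A^{n-1})` (with the uniform convergence/supremum topology). -/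
def IsAlmostPeriodic (L : FirstOrder.Language) (A : Type*) [TopologicalSpace A] [L.Structure A]
    (f : A → ℂ) : Prop :=
  Continuous f ∧ (∃ C, ∀ a, ‖f a‖ ≤ C) ∧
    ∀ (n : ℕ) (Φ : L.Functions n) (t : A → A), IsTranslation L A t →
      ∀ j : Fin n,
        IsCompact (closure {u : ({i : Fin n // i ≠ j} → A) →ᵤ ℂ |
          ∃ a : A, u = UniformFun.ofFun fun x => f (t (Language.Structure.funMap Φ (Fill j x a)))})

/-- The almost periodic functions, as a subtype of `A →ᵤ ℂ`. -/
abbrev APf (L : FirstOrder.Language) (A : Type*) [TopologicalSpace A] [L.Structure A] :=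
  {f : A →ᵤ ℂ // IsAlmostPeriodic L A (UniformFun.toFun f)}

lemma fill_zero {A : Type*} (a z : A) :
    Fill (0 : Fin 2) (fun _ : {i : Fin 2 // i ≠ 0} => a) z = ![z, a] := by
  funext i; fin_cases i <;> simp [Fill]

lemma fill_one {A : Type*} (z a : A) :
    Fill (1 : Fin 2) (fun _ : {i : Fin 2 // i ≠ 1} => z) a = ![z, a] := by
  funext i; fin_cases i <;> simp [Fill]

lemma isAlmostPeriodic_const (L : FirstOrder.Language) (A : Type*) [TopologicalSpace A]
    [L.Structure A] [Nonempty A] (c : ℂ) : IsAlmostPeriodic L A (fun _ => c) := by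
  refine ⟨continuous_const, ⟨‖c‖, fun _ => le_rfl⟩, ?_⟩
  intro n Φ t ht j
  have hset : {u : ({i : Fin n // i ≠ j} → A) →ᵤ ℂ |
      ∃ _ : A, u = UniformFun.ofFun fun _ => c} = {UniformFun.ofFun fun _ => c} :=
    Set.ext fun u => ⟨fun ⟨_, hu⟩ => hu, fun hu => ⟨Classical.arbitrary A, hu⟩⟩
  rw [hset, closure_singleton]
  exact isCompact_singleton

lemma isAlmostPeriodic_translate {L : FirstOrder.Language} {A : Type*} [TopologicalSpace A]
    [L.Structure A]
    (hA : ∀ (n : ℕ) (Ψ : L.Functions n),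
      Continuous fun x : Fin n → A => Language.Structure.funMap Ψ x)
    (Φ : L.Functions 2) (mU : A → A → A)
    (hmU : ∀ z y : A, mU z y = Language.Structure.funMap Φ ![z, y])
    {f : A → ℂ} (hf : IsAlmostPeriodic L A f) (a : A) :
    IsAlmostPeriodic L A (fun z => f (mU z a)) := by
  have hsim : IsSimpleTranslation L A (fun z => mU z a) :=
    ⟨2, Φ, 0, fun _ => a, funext fun z => by rw [hmU, fill_zero]⟩
  refine ⟨?_, ?_, ?_⟩
  · have hc2 : Continuous fun z : A => (![z, a] : Fin 2 → A) := by
      refine continuous_pi fun i => ?_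
      fin_cases i
      · exact continuous_id
      · simpa using continuous_const
    have heq : (fun z : A => mU z a) = fun z => Language.Structure.funMap Φ ![z, a] :=
      funext fun z => hmU z a
    have : Continuous fun z : A => mU z a := by rw [heq]; exact (hA 2 Φ).comp hc2
    exact hf.1.comp this
  · obtain ⟨C, hC⟩ := hf.2.1
    exact ⟨C, fun z => hC _⟩
  · intro n Ψ t ht j
    exact hf.2.2 n Ψ ((fun z => mU z a) ∘ t)
      (IsTranslation.comp (IsTranslation.simple hsim) ht) j

lemma exists_close_pair {X : Type*} {S : Set (X →ᵤ ℂ)} (hK : IsCompact (closure S))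
    (u : ℕ → X →ᵤ ℂ) (hu : ∀ n, u n ∈ S) {ε : ℝ} (hε : 0 < ε) :
    ∃ m k : ℕ, 0 < k ∧
      ∀ x, dist (UniformFun.toFun (u m) x) (UniformFun.toFun (u (m + k)) x) < ε := by
  have hle : Filter.map u Filter.atTop ≤ Filter.principal (closure S) :=
    Filter.le_principal_iff.mpr
      (Filter.mem_map.mpr (Filter.Eventually.of_forall fun n => subset_closure (hu n)))
  obtain ⟨p, -, hp⟩ := hK.exists_mapClusterPt hle
  have hV : {q : ℂ × ℂ | dist q.1 q.2 < ε / 2} ∈ 𝓤 ℂ := Metric.dist_mem_uniformity (by linarith)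
  have hfreq := ((UniformFun.hasBasis_nhds X ℂ p).mapClusterPt_iff_frequently.mp hp) _ hV
  obtain ⟨m, -, hm⟩ := Filter.frequently_atTop.mp hfreq 0
  obtain ⟨n, hn, hn'⟩ := Filter.frequently_atTop.mp hfreq (m + 1)
  refine ⟨m, n - m, by omega, fun x => ?_⟩
  have hidx : m + (n - m) = n := by omega
  rw [hidx]
  calc dist (UniformFun.toFun (u m) x) (UniformFun.toFun (u n) x)
      ≤ dist (UniformFun.toFun (u m) x) (UniformFun.toFun p x)
        + dist (UniformFun.toFun p x) (UniformFun.toFun (u n) x) := dist_triangle _ _ _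
    _ < ε / 2 + ε / 2 := add_lt_add (by rw [dist_comm]; exact hm x) (hn' x)
    _ = ε := add_halves ε


/-- **Theorem 3.1(ii).** Let `T` be a non-vanishing linear isometry of `AP(U)` onto `AP(V)`
represented, as in part (i), by a surjection `h : B → A` and a unimodular `w : B → ℂ` via
`(Tf)(y) = w(y)·f(h(y))`. Suppose `Φ ∈ L` is a binary function symbol whose interpretations are
associative with neutral elements `1_U`, `1_V`, and that `T` commutes with translations via
`λ : B → A`. Then there is `b ∈ B` such that `k := y ↦ h(Φ_V(b,y))` is a `Φ`-isomorphism of `V`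
onto `U`: a bijection with `k(Φ_V(z,y)) = Φ_U(k(z),k(y))` and `k(1_V) = 1_U`. -/
theorem isometry_translation_commuting_isomorphism (L : FirstOrder.Language) (A B : Type*)
    [TopologicalSpace A] [L.Structure A] [Nonempty A]
    [TopologicalSpace B] [L.Structure B] [Nonempty B]
    (hA : ∀ (n : ℕ) (Φ : L.Functions n),
      Continuous fun x : Fin n → A => Language.Structure.funMap Φ x)
    (hB : ∀ (n : ℕ) (Φ : L.Functions n),
      Continuous fun x : Fin n → B => Language.Structure.funMap Φ x)
    (hsepA : ∀ x y : A, x ≠ y → ∃ f : APf L A, UniformFun.toFun f.1 x ≠ UniformFun.toFun f.1 y)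
    (hsepB : ∀ x y : B, x ≠ y → ∃ g : APf L B, UniformFun.toFun g.1 x ≠ UniformFun.toFun g.1 y)
    (T : APf L A → APf L B)
    (hTbij : Function.Bijective T)
    (hTadd : ∀ f g h : APf L A,
      UniformFun.toFun h.1 = UniformFun.toFun f.1 + UniformFun.toFun g.1 →
      UniformFun.toFun (T h).1 = UniformFun.toFun (T f).1 + UniformFun.toFun (T g).1)
    (hTsmul : ∀ (c : ℂ) (f g : APf L A),
      UniformFun.toFun g.1 = c • UniformFun.toFun f.1 →
      UniformFun.toFun (T g).1 = c • UniformFun.toFun (T f).1)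
    (hTiso : ∀ f g : APf L A,
      (⨆ x : A, ‖UniformFun.toFun f.1 x - UniformFun.toFun g.1 x‖) =
        ⨆ y : B, ‖UniformFun.toFun (T f).1 y - UniformFun.toFun (T g).1 y‖)
    (hTnv : ∀ f : APf L A,
      (∀ x : A, UniformFun.toFun f.1 x ≠ 0) ↔ (∀ y : B, UniformFun.toFun (T f).1 y ≠ 0))
    -- the representation of `T` provided by part (i)
    (h : B → A) (w : B → ℂ)
    (hw : ∀ y : B, ‖w y‖ = 1)
    (hrep : ∀ (f : APf L A) (y : B),
      UniformFun.toFun (T f).1 y = w y * UniformFun.toFun f.1 (h y))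
    (hsurj : Function.Surjective h)
    -- the binary symbol `Φ` and its interpretations
    (Φ : L.Functions 2)
    (mU : A → A → A) (hmU : ∀ z y : A, mU z y = Language.Structure.funMap Φ ![z, y])
    (mV : B → B → B) (hmV : ∀ z y : B, mV z y = Language.Structure.funMap Φ ![z, y])
    (hUassoc : ∀ x y z : A, mU (mU x y) z = mU x (mU y z))
    (hVassoc : ∀ x y z : B, mV (mV x y) z = mV x (mV y z))
    (oneU : A) (honeU : ∀ x : A, mU x oneU = x ∧ mU oneU x = x)
    (oneV : B) (honeV : ∀ y : B, mV y oneV = y ∧ mV oneV y = y)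
    -- `T` commutes with (`Φ`-)translations
    (lam : B → A)
    (hcomm : ∀ (f : APf L A) (y : B) (g : APf L A),
      UniformFun.toFun g.1 = (fun z : A => UniformFun.toFun f.1 (mU z (lam y))) →
      (fun z : B => UniformFun.toFun (T f).1 (mV z y)) = UniformFun.toFun (T g).1) :
    ∃ b : B,
      Function.Bijective (fun y : B => h (mV b y)) ∧
      (∀ z y : B, h (mV b (mV z y)) = mU (h (mV b z)) (h (mV b y))) ∧
      h (mV b oneV) = oneU := by
  classical
  -- separation, restated
  have sepA : ∀ a₁ a₂ : A,
      (∀ f : APf L A, UniformFun.toFun f.1 a₁ = UniformFun.toFun f.1 a₂) → a₁ = a₂ := by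
    intro a₁ a₂ hall
    by_contra hne
    obtain ⟨f, hf⟩ := hsepA a₁ a₂ hne
    exact hf (hall f)
  have sepB : ∀ y₁ y₂ : B,
      (∀ g : APf L B, UniformFun.toFun g.1 y₁ = UniformFun.toFun g.1 y₂) → y₁ = y₂ := by
    intro y₁ y₂ hall
    by_contra hne
    obtain ⟨g, hg⟩ := hsepB y₁ y₂ hne
    exact hg (hall g)
  have wne : ∀ y : B, w y ≠ 0 := by
    intro y hy
    have := hw y
    rw [hy, norm_zero] at this
    exact zero_ne_one this
  -- the constant function 1
  set onef : APf L A := ⟨UniformFun.ofFun (fun _ => (1 : ℂ)), isAlmostPeriodic_const L A 1⟩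
    with honef
  -- w is multiplicative-invariant, hence constant
  have wmul : ∀ z y : B, w (mV z y) = w z := by
    intro z y
    have hone : UniformFun.toFun onef.1
        = (fun z : A => UniformFun.toFun onef.1 (mU z (lam y))) := rfl
    have hc := congrFun (hcomm onef y onef hone) z
    rw [hrep, hrep] at hc
    simpa [honef] using hc
  have wconst : ∀ y : B, w y = w oneV := by
    intro y
    rw [← (honeV y).2]
    exact wmul oneV y
  -- the key identity (⋆)
  have star : ∀ z y : B, h (mV z y) = mU (h z) (lam y) := by
    intro z y
    apply sepA
    intro f
    have hg : UniformFun.toFun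
        ((⟨UniformFun.ofFun (fun zz => UniformFun.toFun f.1 (mU zz (lam y))),
          isAlmostPeriodic_translate hA Φ mU hmU f.2 (lam y)⟩ : APf L A)).1
        = fun zz : A => UniformFun.toFun f.1 (mU zz (lam y)) := rfl
    have hc := congrFun (hcomm f y _ hg) z
    rw [hrep, hrep, wmul z y] at hc
    exact mul_left_cancel₀ (wne z) hc
  -- h is injective
  have hinj : Function.Injective h := by
    intro y₁ y₂ hy
    apply sepB
    intro g
    obtain ⟨f, rfl⟩ := hTbij.2 g
    rw [hrep, hrep, hy, wconst y₁, ← wconst y₂]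
  -- the element c and the identity E1
  have E1 : ∀ y : B, h y = mU (h oneV) (lam y) := by
    intro y
    have := star oneV y
    rwa [(honeV y).2] at this
  obtain ⟨b, hb⟩ := hsurj oneU
  have hcd : mU (h oneV) (lam b) = oneU := by
    have := E1 b
    rw [hb] at this
    exact this.symm
  set c : A := h oneV with hcdef
  set d : A := lam b with hddef
  -- powers of c and d
  set cp : ℕ → A := fun n => Nat.rec oneU (fun _ ih => mU c ih) n with hcp
  set dp : ℕ → A := fun n => Nat.rec oneU (fun _ ih => mU ih d) n with hdp
  have dpadd : ∀ a b' : ℕ, dp (a + b') = mU (dp a) (dp b') := by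
    intro a b'
    induction b' with
    | zero => exact ((honeU (dp a)).1).symm
    | succ b' ih =>
      show mU (dp (a + b')) d = mU (dp a) (mU (dp b') d)
      rw [ih, hUassoc]
  have dleft : ∀ j : ℕ, dp (j + 1) = mU d (dp j) := by
    intro j
    rw [Nat.add_comm, dpadd 1 j]
    show mU (mU oneU d) (dp j) = mU d (dp j)
    rw [(honeU d).2]
  have cpdp : ∀ n : ℕ, mU (cp n) (dp n) = oneU := by
    intro n
    induction n with
    | zero => exact (honeU oneU).1
    | succ n ih =>
      show mU (mU c (cp n)) (mU (dp n) d) = oneU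
      rw [hUassoc, ← hUassoc (cp n) (dp n) d, ih, (honeU d).2, hcd]
  have L2 : ∀ m k : ℕ, mU (cp m) (dp (m + k)) = dp k := by
    intro m k
    rw [dpadd, ← hUassoc, cpdp, (honeU _).2]
  -- the compactness argument: dc = 1
  have hdc : mU d c = oneU := by
    apply sepA
    intro f
    by_contra hne
    have hdpos : 0 < dist (UniformFun.toFun f.1 (mU d c)) (UniformFun.toFun f.1 oneU) :=
      dist_pos.mpr hne
    set ε : ℝ := dist (UniformFun.toFun f.1 (mU d c)) (UniformFun.toFun f.1 oneU) with hε
    have hid : IsTranslation L A (id : A → A) :=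
      IsTranslation.simple ⟨2, Φ, 0, fun _ => oneU, funext fun z => by
        show z = Language.Structure.funMap Φ (Fill 0 (fun _ => oneU) z)
        rw [fill_zero, ← hmU]
        exact ((honeU z).1).symm⟩
    have hK := f.2.2.2 2 Φ id hid 1
    set u : ℕ → ({i : Fin 2 // i ≠ (1 : Fin 2)} → A) →ᵤ ℂ := fun n =>
      UniformFun.ofFun fun x =>
        UniformFun.toFun f.1 (id (Language.Structure.funMap Φ (Fill 1 x (dp n)))) with hu
    have humem : ∀ n, u n ∈ {v : ({i : Fin 2 // i ≠ (1 : Fin 2)} → A) →ᵤ ℂ |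
        ∃ a : A, v = UniformFun.ofFun fun x =>
          UniformFun.toFun f.1 (id (Language.Structure.funMap Φ (Fill 1 x a)))} :=
      fun n => ⟨dp n, rfl⟩
    obtain ⟨m, k, hk, hclose⟩ := exists_close_pair hK u humem (half_pos hdpos)
    have heval : ∀ (n : ℕ) (z : A),
        UniformFun.toFun (u n) (fun _ => z) = UniformFun.toFun f.1 (mU z (dp n)) := by
      intro n z
      show UniformFun.toFun f.1 (id (Language.Structure.funMap Φ (Fill 1 (fun _ => z) (dp n))))
        = UniformFun.toFun f.1 (mU z (dp n))
      rw [fill_one, id_eq, ← hmU]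
    have hcl : ∀ z : A,
        dist (UniformFun.toFun f.1 (mU z (dp m))) (UniformFun.toFun f.1 (mU z (dp (m + k))))
          < ε / 2 := by
      intro z
      have := hclose (fun _ => z)
      rwa [heval, heval] at this
    obtain ⟨k', rfl⟩ : ∃ k', k = k' + 1 := ⟨k - 1, by omega⟩
    have A1 := hcl (cp m)
    rw [cpdp m, L2 m (k' + 1)] at A1
    have B0 : mU (mU d (cp (m + 1))) (dp m) = mU d c := by
      rw [hUassoc]
      congr 1
      show mU (mU c (cp m)) (dp m) = c
      rw [hUassoc, cpdp, (honeU c).1]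
    have B1 : mU (mU d (cp (m + 1))) (dp (m + (k' + 1))) = dp (k' + 1) := by
      have hidx : m + (k' + 1) = (m + 1) + k' := by omega
      rw [hUassoc, hidx, L2 (m + 1) k']
      exact (dleft k').symm
    have A2 := hcl (mU d (cp (m + 1)))
    rw [B0, B1] at A2
    have : ε < ε := by
      calc ε = dist (UniformFun.toFun f.1 (mU d c)) (UniformFun.toFun f.1 oneU) := rfl
        _ ≤ dist (UniformFun.toFun f.1 (mU d c)) (UniformFun.toFun f.1 (dp (k' + 1)))
            + dist (UniformFun.toFun f.1 (dp (k' + 1))) (UniformFun.toFun f.1 oneU) :=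
          dist_triangle _ _ _
        _ < ε / 2 + ε / 2 := add_lt_add A2 (by rw [dist_comm]; exact A1)
        _ = ε := add_halves ε
    exact lt_irrefl _ this
  -- lam is surjective
  have lamsurj : Function.Surjective lam := by
    intro a
    obtain ⟨y, hy⟩ := hsurj (mU c a)
    refine ⟨y, ?_⟩
    have h2 : mU c (lam y) = mU c a := (E1 y).symm.trans hy
    calc lam y = mU oneU (lam y) := ((honeU _).2).symm
      _ = mU (mU d c) (lam y) := by rw [hdc]
      _ = mU d (mU c (lam y)) := hUassoc _ _ _
      _ = mU d (mU c a) := by rw [h2]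
      _ = mU (mU d c) a := (hUassoc _ _ _).symm
      _ = a := by rw [hdc, (honeU a).2]
  have keq : ∀ y : B, h (mV b y) = lam y := by
    intro y
    rw [star b y, hb, (honeU _).2]
  refine ⟨b, ⟨?_, ?_⟩, ?_, ?_⟩
  · intro y₁ y₂ hy
    simp only at hy
    apply hinj
    rw [E1 y₁, E1 y₂, ← keq y₁, ← keq y₂, hy]
  · intro a
    obtain ⟨y, hy⟩ := lamsurj a
    exact ⟨y, (keq y).trans hy⟩
  · intro z y
    rw [← hVassoc, keq y, star (mV b z) y]
  · rw [(honeV b).1, hb]
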